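/- Suppose ψ : (0, r₀] → ℝ is differentiable, satisfies ψ' + ((2 sn_H'/sn_H) + (2/(n-1))f')·ψ ≤ 4(n-1)·(sn_H'/sn_H)² on (0, r₀] where sn_H > 0 and f is C¹ with |f| ≤ k, and sn_H²(r)e^{(2/(n-1))f(r)}ψ(r) → 0 as r → 0⁺. Then sn_H²(r)·e^{(2/(n-1))f(r)}·ψ(r) ≤ 4(n-1)·∫₀ʳ e^{(2/(n-1))f(t)}·(sn_H'(t))² dt for all r ∈ (0, r₀]. -/

import Mathlib

open Real Set Filter

/-- Integrating-factor step in the ODE proof of the mean curvature comparison (part b). -/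
theorem integrating_factor_estimate (H : ℝ) (n : ℕ) (hn : 2 ≤ n) (k r₀ : ℝ)
    (hk : 0 ≤ k) (hr₀ : 0 < r₀)
    (sn sn' : ℝ → ℝ)
    (hsn : ∀ x, HasDerivAt sn (sn' x) x)
    (hsn' : ∀ x, HasDerivAt sn' (-(H * sn x)) x)
    (hsn0 : sn 0 = 0) (hsn0' : sn' 0 = 1)
    (hsnpos : ∀ t ∈ Ioc (0:ℝ) r₀, 0 < sn t)
    (ψ ψ' f f' : ℝ → ℝ)
    (hψ : ∀ t ∈ Ioc (0:ℝ) r₀, HasDerivAt ψ (ψ' t) t)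
    (hf : ∀ t ∈ Icc (0:ℝ) r₀, HasDerivAt f (f' t) t)
    (hf'cont : ContinuousOn f' (Icc (0:ℝ) r₀))
    (hfbd : ∀ t ∈ Icc (0:ℝ) r₀, |f t| ≤ k)
    (hineq : ∀ t ∈ Ioc (0:ℝ) r₀,
      ψ' t + (2 * sn' t / sn t + (2 / (n - 1 : ℝ)) * f' t) * ψ t
        ≤ 4 * (n - 1 : ℝ) * (sn' t / sn t) ^ 2)
    (hbdry : Tendsto (fun t => sn t ^ 2 * Real.exp ((2 / (n - 1 : ℝ)) * f t) * ψ t)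
      (nhdsWithin 0 (Ioi 0)) (nhds 0)) :
    ∀ r ∈ Ioc (0:ℝ) r₀,
      sn r ^ 2 * Real.exp ((2 / (n - 1 : ℝ)) * f r) * ψ r
        ≤ 4 * (n - 1 : ℝ) *
            ∫ t in (0:ℝ)..r, Real.exp ((2 / (n - 1 : ℝ)) * f t) * (sn' t) ^ 2 := by
  set c : ℝ := 2 / (n - 1 : ℝ) with hc
  set g : ℝ → ℝ := fun t => Real.exp (c * f t) * (sn' t) ^ 2 with hg
  set G : ℝ → ℝ := fun t => sn t ^ 2 * Real.exp (c * f t) * ψ t with hG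
  set F : ℝ → ℝ := fun u => 4 * (n - 1 : ℝ) * ∫ t in (0:ℝ)..u, g t with hF
  set φ : ℝ → ℝ := fun t => F t - G t with hφ
  -- continuity of g on Icc 0 r₀
  have hgc : ∀ t ∈ Icc (0:ℝ) r₀, ContinuousAt g t := by
    intro t ht
    exact (((hf t ht).continuousAt.const_mul c).rexp.mul
      (((hsn' t).continuousAt).pow 2))
  have hgcOn : ContinuousOn g (Icc (0:ℝ) r₀) := fun t ht => (hgc t ht).continuousWithinAt
  have hgint : ∀ t ∈ Icc (0:ℝ) r₀, IntervalIntegrable g MeasureTheory.volume 0 t := by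
    intro t ht
    apply ContinuousOn.intervalIntegrable
    apply hgcOn.mono
    rw [uIcc_of_le ht.1]
    exact Icc_subset_Icc le_rfl ht.2
  -- continuity of F on Icc 0 r₀
  have hFcont : ContinuousOn F (Icc (0:ℝ) r₀) := by
    have h1 : ContinuousOn (fun u => ∫ t in (0:ℝ)..u, g t) (Icc (0:ℝ) r₀) := by
      have := intervalIntegral.continuousOn_primitive_interval
        (μ := MeasureTheory.volume) (a := (0:ℝ)) (b := r₀) (f := g)
        (by rw [uIcc_of_le hr₀.le]; exact hgcOn.integrableOn_Icc)
      rwa [uIcc_of_le hr₀.le] at this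
    exact continuousOn_const.mul h1
  -- derivative of G on Ioc
  have hGd : ∀ t ∈ Ioc (0:ℝ) r₀, HasDerivAt G
      ((2 * sn t * sn' t * Real.exp (c * f t)
        + sn t ^ 2 * (Real.exp (c * f t) * (c * f' t))) * ψ t
        + sn t ^ 2 * Real.exp (c * f t) * ψ' t) t := by
    intro t ht
    have h1 : HasDerivAt (fun t => sn t ^ 2) (2 * sn t * sn' t) t := by
      have : HasDerivAt (fun t => sn t ^ 2) _ t := (hsn t).pow 2
      simpa [mul_comm, mul_assoc] using this
    have h2 : HasDerivAt (fun t => Real.exp (c * f t))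
        (Real.exp (c * f t) * (c * f' t)) t :=
      (((hf t ⟨ht.1.le, ht.2⟩).const_mul c).exp)
    exact (h1.mul h2).mul (hψ t ht)
  -- derivative of F on Ioo
  have hFd : ∀ t ∈ Ioo (0:ℝ) r₀, HasDerivAt F (4 * (n - 1 : ℝ) * g t) t := by
    intro t ht
    have hmem : Icc (0:ℝ) r₀ ∈ nhds t := Icc_mem_nhds ht.1 ht.2
    have hint : HasDerivAt (fun u => ∫ s in (0:ℝ)..u, g s) (g t) t := by
      apply intervalIntegral.integral_hasDerivAt_right (hgint t ⟨ht.1.le, ht.2.le⟩)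
      · exact ⟨Icc (0:ℝ) r₀, hmem, (hgcOn.aestronglyMeasurable measurableSet_Icc)⟩
      · exact hgc t ⟨ht.1.le, ht.2.le⟩
    exact hint.const_mul _
  have hn1 : (0:ℝ) < (n:ℝ) - 1 := by
    have : (2:ℝ) ≤ (n:ℝ) := by exact_mod_cast hn
    linarith
  -- φ has nonnegative derivative on Ioo
  have hφd : ∀ t ∈ Ioo (0:ℝ) r₀, HasDerivAt φ
      (4 * (n - 1 : ℝ) * g t -
        ((2 * sn t * sn' t * Real.exp (c * f t)
        + sn t ^ 2 * (Real.exp (c * f t) * (c * f' t))) * ψ t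
        + sn t ^ 2 * Real.exp (c * f t) * ψ' t)) t := by
    intro t ht
    exact (hFd t ht).sub (hGd t ⟨ht.1, ht.2.le⟩)
  have hφ'nonneg : ∀ t ∈ Ioo (0:ℝ) r₀,
      0 ≤ 4 * (n - 1 : ℝ) * g t -
        ((2 * sn t * sn' t * Real.exp (c * f t)
        + sn t ^ 2 * (Real.exp (c * f t) * (c * f' t))) * ψ t
        + sn t ^ 2 * Real.exp (c * f t) * ψ' t) := by
    intro t ht
    have hsnt : 0 < sn t := hsnpos t ⟨ht.1, ht.2.le⟩
    have hexp : 0 < Real.exp (c * f t) := Real.exp_pos _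
    have key := mul_le_mul_of_nonneg_left (hineq t ⟨ht.1, ht.2.le⟩)
      (le_of_lt (mul_pos (pow_pos hsnt 2) hexp))
    have hne : sn t ≠ 0 := ne_of_gt hsnt
    rw [sub_nonneg]
    calc (2 * sn t * sn' t * Real.exp (c * f t)
        + sn t ^ 2 * (Real.exp (c * f t) * (c * f' t))) * ψ t
        + sn t ^ 2 * Real.exp (c * f t) * ψ' t
        = sn t ^ 2 * Real.exp (c * f t) *
          (ψ' t + (2 * sn' t / sn t + c * f' t) * ψ t) := by
          field_simp
          ring
      _ ≤ sn t ^ 2 * Real.exp (c * f t) * (4 * (n - 1 : ℝ) * (sn' t / sn t) ^ 2) := key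
      _ = 4 * (n - 1 : ℝ) * g t := by
          rw [hg]
          field_simp
  -- φ tends to 0 at 0⁺
  have hφlim : Tendsto φ (nhdsWithin 0 (Ioi 0)) (nhds 0) := by
    have hFlim : Tendsto F (nhdsWithin 0 (Ioi 0)) (nhds 0) := by
      have h0 : F 0 = 0 := by simp [hF]
      have := (hFcont 0 ⟨le_rfl, hr₀.le⟩)
      rw [ContinuousWithinAt, h0] at this
      refine this.mono_left ?_
      rw [← nhdsWithin_Ioc_eq_nhdsGT hr₀]
      exact nhdsWithin_mono 0 Ioc_subset_Icc_self
    have := hFlim.sub hbdry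
    simpa using this
  -- conclude
  intro r hr
  have hmono : ∀ ε ∈ Ioo (0:ℝ) r, φ ε ≤ φ r := by
    intro ε hε
    have hsub : Icc ε r ⊆ Ioc (0:ℝ) r₀ := fun x hx => ⟨lt_of_lt_of_le hε.1 hx.1, le_trans hx.2 hr.2⟩
    have hcont : ContinuousOn φ (Icc ε r) := by
      intro x hx
      rcases eq_or_lt_of_le (hsub hx).2 with h | h
      · apply ContinuousWithinAt.sub
        · exact (hFcont x ⟨(hsub hx).1.le, (hsub hx).2⟩).mono
            (fun y hy => ⟨le_trans hε.1.le hy.1, le_trans hy.2 hr.2⟩)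
        · exact ((hGd x (hsub hx)).continuousAt).continuousWithinAt
      · exact ((hφd x ⟨(hsub hx).1, h⟩).continuousAt).continuousWithinAt
    have hdiff : DifferentiableOn ℝ φ (interior (Icc ε r)) := by
      rw [interior_Icc]
      intro x hx
      have hx' : x ∈ Ioo (0:ℝ) r₀ := ⟨lt_trans hε.1 hx.1, lt_of_lt_of_le hx.2 hr.2⟩
      exact ((hφd x hx').differentiableAt).differentiableWithinAt
    have hderiv : ∀ x ∈ interior (Icc ε r), 0 ≤ deriv φ x := by
      rw [interior_Icc]
      intro x hx
      have hx' : x ∈ Ioo (0:ℝ) r₀ := ⟨lt_trans hε.1 hx.1, lt_of_lt_of_le hx.2 hr.2⟩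
      rw [(hφd x hx').deriv]
      exact hφ'nonneg x hx'
    exact monotoneOn_of_deriv_nonneg (convex_Icc ε r) hcont hdiff hderiv
      ⟨le_rfl, hε.2.le⟩ ⟨hε.2.le, le_rfl⟩ hε.2.le
  have hev : ∀ᶠ ε in nhdsWithin 0 (Ioi 0), φ ε ≤ φ r := by
    filter_upwards [Ioo_mem_nhdsGT_of_mem (Set.mem_Ico.mpr ⟨le_rfl, hr.1⟩)] with ε hε
    exact hmono ε hε
  have h0le : (0:ℝ) ≤ φ r := le_of_tendsto hφlim hev
  rw [hφ] at h0le
  simp only [sub_nonneg] at h0le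
  simpa [hF, hG] using h0le
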